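/- Let O be a generic type C column sequence with chains [c_0 (c_1 c_2) … (c_{2p−1} c_{2p}) c_{2p+1}], …, [d_0 (d_1 d_2) … (d_{2q−1} d_{2q}) d_{2q+1}]. Consider the two multisets of halved pair sums: M_1 = { (c_0+c_1)/2, (c_2+c_3)/2, …, (c_{2p}+c_{2p+1})/2, …, (d_0+d_1)/2, …, (d_{2q}+d_{2q+1})/2 } (consecutive pairing within each chain) and M_2 = { (c_1+c_2)/2, …, (c_{2p−1}+c_{2p})/2, (c_0+c_{2p+1})/2, …, (d_1+d_2)/2, …, (d_{2q−1}+d_{2q})/2, (d_0+d_{2q+1})/2 } (the interior pairs together with the average of the two end entries, within each chain). Then M_1 = M_2 as multisets if and only if every chain of O has length 2 (i.e. p = … = q = 0). -/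

import Mathlib

/-- A type C column sequence: weakly decreasing, even length, and each
consecutive pair `(c_{2i}, c_{2i+1})` has even sum. -/
def TypeC (c : List ℕ) : Prop :=
  Even c.length ∧ c.Chain' (· ≥ ·) ∧
    ∀ i, 2 * i + 1 < c.length → Even (c.getD (2 * i) 0 + c.getD (2 * i + 1) 0)

/-- A chain `[b_0, b_1, …, b_{2k+1}]`: nonempty, of even length, weakly
decreasing, with `b_{2i-1} = b_{2i}` for `1 ≤ i ≤ k`. -/
def IsChainSeq (b : List ℕ) : Prop :=
  b ≠ [] ∧ Even b.length ∧ b.Chain' (· ≥ ·) ∧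
    ∀ i, 2 * i + 2 < b.length → b.getD (2 * i + 1) 0 = b.getD (2 * i + 2) 0

/-- The chain decomposition of a column sequence: cut after each odd
position `2q+1` such that `c_{2q+1} > c_{2q+2}`. -/
def chains : List ℕ → List (List ℕ)
  | a :: b :: rest =>
    match chains rest with
    | [] => [[a, b]]
    | C :: L => if C.headI < b then [a, b] :: C :: L else (a :: b :: C) :: L
  | _ => []

/-- A chain is generic if it is `[b_0 = b_1]` (length 2 with equal entries)
or has length `≥ 4` and `b_{2i} > b_{2i+1}` for all `i`. -/
def GenericChain (b : List ℕ) : Prop :=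
  (b.length = 2 ∧ b.getD 0 0 = b.getD 1 0) ∨
  (4 ≤ b.length ∧ ∀ i, 2 * i + 1 < b.length → b.getD (2 * i + 1) 0 < b.getD (2 * i) 0)

/-- A column sequence is generic if all of its chains are generic. -/
def GenericSeq (c : List ℕ) : Prop := ∀ C ∈ chains c, GenericChain C

/-- The fundamental degeneration of a quadruple `b_0 ≥ b_1 = b_2 ≥ b_3`. -/
def fundDeg (b0 b1 b2 b3 : ℕ) : ℕ × ℕ × ℕ × ℕ :=
  if b0 = b1 then
    if b2 = b3 then (b0 + 1, b1 + 1, b2 - 1, b3 - 1)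
    else (b0 + 1, b1 + 1, b2 - 2, b3)
  else
    if b2 = b3 then (b0, b1 + 2, b2 - 1, b3 - 1)
    else (b0, b1 + 2, b2 - 2, b3)

/-- Replacement of the four consecutive entries at positions
`2i, 2i+1, 2i+2, 2i+3` by their fundamental degeneration, deleting the
last two entries if the two lowered entries both become `0`. -/
def degenAt (c : List ℕ) (i : ℕ) : List ℕ :=
  let q := fundDeg (c.getD (2 * i) 0) (c.getD (2 * i + 1) 0)
    (c.getD (2 * i + 2) 0) (c.getD (2 * i + 3) 0)
  let c' := c.take (2 * i) ++ [q.1, q.2.1, q.2.2.1, q.2.2.2] ++ c.drop (2 * i + 4)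
  if q.2.2.1 = 0 ∧ q.2.2.2 = 0 then c'.dropLast.dropLast else c'

/-- `Norm(O)`: the smallest collection containing `O` and closed under
fundamental degeneration at an interior pair of a chain (the positions
`(2i+1, 2i+2)` carry an interior pair of a chain exactly when the two
entries there are equal). -/
inductive NormMem (O : List ℕ) : List ℕ → Prop
  | base : NormMem O O
  | step (c : List ℕ) (i : ℕ) : NormMem O c → 2 * i + 3 < c.length →
      c.getD (2 * i + 1) 0 = c.getD (2 * i + 2) 0 → NormMem O (degenAt c i)

/-- The multiset of halved sums of consecutive pairs. -/
def pairAvgs : List ℕ → Multiset ℕ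
  | a :: b :: rest => (a + b) / 2 ::ₘ pairAvgs rest
  | _ => 0

/-- The multiset attached to a single chain by the second pairing: the
halved sums of its interior pairs together with the average of its two end
entries. -/
def chainM2 (C : List ℕ) : Multiset ℕ :=
  (C.headI + C.getLastD 0) / 2 ::ₘ pairAvgs C.tail.dropLast


/-- Structural shape of a chain produced by `chains`. -/
inductive CS : List ℕ → Prop
  | pair (a b : ℕ) : b ≤ a → CS [a, b]
  | cons (a b : ℕ) (C : List ℕ) : b ≤ a → CS (b :: C) → CS (a :: b :: b :: C)

def Par (C : List ℕ) : Prop := ∀ x ∈ C, x % 2 = C.headI % 2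

def sqs (M : Multiset ℕ) : ℕ := (M.map (fun x => x * x)).sum


lemma cs_ne_nil {l : List ℕ} (h : CS l) : l ≠ [] := by cases h <;> simp

lemma cs_cons_ne {x : ℕ} {l : List ℕ} (h : CS (x :: l)) : l ≠ [] := by
  cases h <;> simp

lemma cs_chain {l : List ℕ} (h : CS l) : l.Chain' (· ≥ ·) := by
  induction h with
  | pair a b hba => exact List.isChain_cons_cons.2 ⟨hba, List.isChain_singleton b⟩
  | cons a b C hba _ ih =>
      exact List.isChain_cons_cons.2 ⟨hba, List.isChain_cons_cons.2 ⟨le_refl b, ih⟩⟩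

lemma lastD_le_head : ∀ l : List ℕ, l.Chain' (· ≥ ·) → l.getLastD 0 ≤ l.headI
  | [] => by simp
  | [x] => by simp
  | x :: y :: r => by
    intro h
    replace h := List.isChain_cons_cons.mp h
    have := lastD_le_head (y :: r) h.2
    simp only [List.getLastD_cons, List.headI] at this ⊢
    omega

lemma getLastD_mem : ∀ (l : List ℕ) (d : ℕ), l ≠ [] → l.getLastD d ∈ l
  | [x], d, _ => by simp
  | x :: y :: r, d, _ => by
    have h1 : (x :: y :: r).getLastD d = (y :: r).getLastD x := List.getLastD_cons ..
    rw [h1]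
    exact List.mem_cons_of_mem _ (getLastD_mem (y :: r) x (by simp))

lemma arith_int (x y z u v w : ℤ) (hu : 2*u = x + y) (hv : 2*v = y + z)
    (hw : 2*w = x + z) (hzy : z ≤ y) (hyx : y ≤ x) :
    w*w + y*y ≤ u*u + v*v := by
  have h1 : 4*(u*u) = (x+y)*(x+y) := by rw [← hu]; ring
  have h2 : 4*(v*v) = (y+z)*(y+z) := by rw [← hv]; ring
  have h3 : 4*(w*w) = (x+z)*(x+z) := by rw [← hw]; ring
  nlinarith [mul_nonneg (sub_nonneg.2 hyx) (sub_nonneg.2 hzy)]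

lemma arith_int_strict (x y z u v w : ℤ) (hu : 2*u = x + y) (hv : 2*v = y + z)
    (hw : 2*w = x + z) (hzy : z < y) (hyx : y < x) :
    w*w + y*y < u*u + v*v := by
  have h1 : 4*(u*u) = (x+y)*(x+y) := by rw [← hu]; ring
  have h2 : 4*(v*v) = (y+z)*(y+z) := by rw [← hv]; ring
  have h3 : 4*(w*w) = (x+z)*(x+z) := by rw [← hw]; ring
  nlinarith [mul_pos (sub_pos.2 hyx) (sub_pos.2 hzy)]

lemma arith_nat (x y z : ℕ) (hzy : z ≤ y) (hyx : y ≤ x)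
    (p1 : x % 2 = y % 2) (p2 : y % 2 = z % 2) :
    ((x+z)/2)*((x+z)/2) + y*y ≤ ((x+y)/2)*((x+y)/2) + ((y+z)/2)*((y+z)/2) := by
  have key : ((((x+z)/2 : ℕ) : ℤ))*(((x+z)/2 : ℕ)) + (y:ℤ)*y ≤
      (((x+y)/2 : ℕ) : ℤ)*(((x+y)/2 : ℕ)) + (((y+z)/2 : ℕ) : ℤ)*(((y+z)/2 : ℕ)) := by
    apply arith_int (x:ℤ) (y:ℤ) (z:ℤ) <;> push_cast <;> omega
  exact_mod_cast key

lemma arith_nat_strict (x y z : ℕ) (hzy : z < y) (hyx : y < x)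
    (p1 : x % 2 = y % 2) (p2 : y % 2 = z % 2) :
    ((x+z)/2)*((x+z)/2) + y*y < ((x+y)/2)*((x+y)/2) + ((y+z)/2)*((y+z)/2) := by
  have key : ((((x+z)/2 : ℕ) : ℤ))*(((x+z)/2 : ℕ)) + (y:ℤ)*y <
      (((x+y)/2 : ℕ) : ℤ)*(((x+y)/2 : ℕ)) + (((y+z)/2 : ℕ) : ℤ)*(((y+z)/2 : ℕ)) := by
    apply arith_int_strict (x:ℤ) (y:ℤ) (z:ℤ) <;> push_cast <;> omega
  exact_mod_cast key


lemma sqs_cons (a : ℕ) (M : Multiset ℕ) : sqs (a ::ₘ M) = a*a + sqs M := by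
  simp [sqs]

lemma sqs_listsum : ∀ L : List (Multiset ℕ), sqs L.sum = (L.map sqs).sum
  | [] => by simp [sqs]
  | M :: L => by
    simp only [List.sum_cons, List.map_cons, sqs, Multiset.map_add, Multiset.sum_add]
    have := sqs_listsum L
    simp [sqs] at this ⊢
    omega

lemma getLastD_irrel (x d d' : ℕ) (l : List ℕ) :
    (x :: l).getLastD d = (x :: l).getLastD d' := by
  rw [List.getLastD_cons, List.getLastD_cons]

lemma chainM2_pair (x y : ℕ) : chainM2 [x, y] = pairAvgs [x, y] := by
  simp [chainM2, pairAvgs]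

lemma chainM2_cons (a b : ℕ) (C : List ℕ) (hC : C ≠ []) :
    chainM2 (a :: b :: b :: C) =
      (a + C.getLastD b)/2 ::ₘ b ::ₘ pairAvgs C.dropLast := by
  rcases C with _ | ⟨c, C'⟩
  · exact absurd rfl hC
  · simp only [chainM2]
    rw [List.getLastD_cons, List.getLastD_cons, List.getLastD_cons]
    simp only [List.headI, List.tail]
    rw [List.dropLast_cons₂, List.dropLast_cons₂]
    simp only [pairAvgs]
    have hb : (b + b)/2 = b := by omega
    rw [hb]

lemma chainM2_cons2 (b : ℕ) (C : List ℕ) (hC : C ≠ []) :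
    chainM2 (b :: C) = (b + C.getLastD b)/2 ::ₘ pairAvgs C.dropLast := by
  rcases C with _ | ⟨c, C'⟩
  · exact absurd rfl hC
  · simp only [chainM2]
    rw [List.getLastD_cons]
    simp only [List.headI, List.tail]

lemma gap : ∀ C : List ℕ, CS C → Par C → sqs (chainM2 C) ≤ sqs (pairAvgs C) := by
  intro C h
  induction h with
  | pair a b hba => intro _; rw [chainM2_pair]
  | cons a b C hba hsub ih =>
    intro hp
    have hC : C ≠ [] := cs_cons_ne hsub
    have hL : C.getLastD b ≤ b := by
      have h1 := lastD_le_head (b :: C) (cs_chain hsub)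
      rw [List.getLastD_cons] at h1
      exact h1
    have hpar_sub : Par (b :: C) := by
      intro x hx
      have hxa := hp x (by simp [hx])
      have hba2 := hp b (by simp)
      simp only [List.headI] at *
      omega
    have hLm : C.getLastD b ∈ b :: C := by
      have h2 := getLastD_mem (b :: C) 0 (by simp)
      rw [List.getLastD_cons] at h2
      exact h2
    have hpb : a % 2 = b % 2 := (hp b (by simp)).symm
    have hpL : b % 2 = C.getLastD b % 2 := by
      have h1 := hpar_sub _ hLm
      have h2 := hpar_sub b (by simp)
      simp only [List.headI] at *
      omega
    have key := arith_nat a b (C.getLastD b) hL (by omega) hpb hpL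
    have ihv := ih hpar_sub
    rw [chainM2_cons a b C hC] at *
    rw [chainM2_cons2 b C hC] at *
    have e1 : pairAvgs (a :: b :: b :: C) = (a+b)/2 ::ₘ pairAvgs (b :: C) := by
      simp [pairAvgs]
    rw [e1]
    simp only [sqs_cons] at *
    omega


lemma last_lt_head : ∀ l : List ℕ, CS l →
    (∀ i, 2*i+1 < l.length → l.getD (2*i+1) 0 < l.getD (2*i) 0) →
    l.getLastD 0 < l.headI := by
  intro l h
  induction h with
  | pair a b hba =>
    intro hs
    have := hs 0 (by simp)
    simpa using this
  | cons a b C hba hsub ih =>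
    intro hs
    have hC : C ≠ [] := cs_cons_ne hsub
    have hshift : ∀ i, 2*i+1 < (b :: C).length →
        (b :: C).getD (2*i+1) 0 < (b :: C).getD (2*i) 0 := by
      intro i hi
      have := hs (i+1) (by simp at hi ⊢; omega)
      have e1 : 2*(i+1)+1 = (2*i+1)+1+1 := by ring
      have e2 : 2*(i+1) = (2*i)+1+1 := by ring
      rw [e1, e2, List.getD_cons_succ, List.getD_cons_succ,
        List.getD_cons_succ, List.getD_cons_succ] at this
      exact this
    have := ih hshift
    rw [List.getLastD_cons] at this
    rw [List.getLastD_cons, List.getLastD_cons, List.getLastD_cons]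
    rcases C with _ | ⟨c, C'⟩
    · exact absurd rfl hC
    · rw [getLastD_irrel c b 0 C']
      rw [getLastD_irrel c b 0 C'] at this
      simp only [List.headI] at this ⊢
      omega

lemma gap_strict (C : List ℕ) (h : CS C) (hp : Par C) (hlen : C.length ≠ 2)
    (hs : ∀ i, 2*i+1 < C.length → C.getD (2*i+1) 0 < C.getD (2*i) 0) :
    sqs (chainM2 C) < sqs (pairAvgs C) := by
  cases h with
  | pair a b hba => simp at hlen
  | cons a b C hba hsub =>
    have hC : C ≠ [] := cs_cons_ne hsub
    have hab : b < a := by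
      have := hs 0 (by simp)
      simpa using this
    have hshift : ∀ i, 2*i+1 < (b :: C).length →
        (b :: C).getD (2*i+1) 0 < (b :: C).getD (2*i) 0 := by
      intro i hi
      have := hs (i+1) (by simp at hi ⊢; omega)
      have e1 : 2*(i+1)+1 = (2*i+1)+1+1 := by ring
      have e2 : 2*(i+1) = (2*i)+1+1 := by ring
      rw [e1, e2, List.getD_cons_succ, List.getD_cons_succ,
        List.getD_cons_succ, List.getD_cons_succ] at this
      exact this
    have hL : C.getLastD b < b := by
      have h1 := last_lt_head (b :: C) hsub hshift
      rw [List.getLastD_cons] at h1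
      exact h1
    have hpar_sub : Par (b :: C) := by
      intro x hx
      have hxa := hp x (by simp [hx])
      have hba2 := hp b (by simp)
      simp only [List.headI] at *
      omega
    have hLm : C.getLastD b ∈ b :: C := by
      have h2 := getLastD_mem (b :: C) 0 (by simp)
      rw [List.getLastD_cons] at h2
      exact h2
    have hpb : a % 2 = b % 2 := (hp b (by simp)).symm
    have hpL : b % 2 = C.getLastD b % 2 := by
      have h1 := hpar_sub _ hLm
      have h2 := hpar_sub b (by simp)
      simp only [List.headI] at *
      omega
    have key := arith_nat_strict a b (C.getLastD b) hL hab hpb hpL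
    have ihv := gap (b :: C) hsub hpar_sub
    rw [chainM2_cons a b C hC] at *
    rw [chainM2_cons2 b C hC] at *
    have e1 : pairAvgs (a :: b :: b :: C) = (a+b)/2 ::ₘ pairAvgs (b :: C) := by
      simp [pairAvgs]
    rw [e1]
    simp only [sqs_cons] at *
    omega


lemma typeC_tail (a b : ℕ) (rest : List ℕ) (h : TypeC (a :: b :: rest)) :
    TypeC rest := by
  obtain ⟨he, hc, hp⟩ := h
  refine ⟨?_, ?_, ?_⟩
  · simp at he ⊢
    rcases he with ⟨k, hk⟩
    exact ⟨k - 1, by omega⟩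
  · exact (hc.tail).tail
  · intro i hi
    have := hp (i+1) (by simp at hi ⊢; omega)
    have e1 : 2*(i+1)+1 = (2*i+1)+1+1 := by ring
    have e2 : 2*(i+1) = (2*i)+1+1 := by ring
    rw [e1, e2, List.getD_cons_succ, List.getD_cons_succ,
      List.getD_cons_succ, List.getD_cons_succ] at this
    exact this

lemma typeC_even_head (a b : ℕ) (rest : List ℕ) (h : TypeC (a :: b :: rest)) :
    a % 2 = b % 2 := by
  have h0 := h.2.2 0 (by simp)
  simp only [Nat.mul_zero, List.getD_cons_zero, List.getD_cons_succ] at h0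
  rcases h0 with ⟨k, hk⟩
  omega

lemma chains_ne_nil_shape (rest : List ℕ) (C : List ℕ) (L : List (List ℕ))
    (h : chains rest = C :: L) : ∃ x y r, rest = x :: y :: r := by
  match rest with
  | [] => simp [chains] at h
  | [x] => simp [chains] at h
  | x :: y :: r => exact ⟨x, y, r, rfl⟩

lemma chains_head (O : List ℕ) (C : List ℕ) (L : List (List ℕ))
    (h : chains O = C :: L) : C.headI = O.headI := by
  match O with
  | [] => simp [chains] at h
  | [x] => simp [chains] at h
  | a :: b :: rest =>
    rcases hc : chains rest with _ | ⟨C', L'⟩ <;> simp only [chains, hc] at h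
    · cases h
      rfl
    · split at h <;> (cases h; rfl)

lemma master : ∀ n (O : List ℕ), O.length ≤ n → TypeC O →
    pairAvgs O = ((chains O).map pairAvgs).sum ∧ ∀ C ∈ chains O, CS C ∧ Par C := by
  intro n
  induction n with
  | zero =>
    intro O hl hO
    match O with
    | [] => simp [chains, pairAvgs]
    | x :: r => simp at hl
  | succ n ih =>
    intro O hl hO
    match O with
    | [] => simp [chains, pairAvgs]
    | [a] => exact absurd hO.1 (by simp [Nat.even_iff])
    | a :: b :: rest =>
      have hrest : TypeC rest := typeC_tail a b rest hO
      have hab2 : a % 2 = b % 2 := typeC_even_head a b rest hO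
      have hba : b ≤ a := (List.isChain_cons_cons.mp hO.2.1).1
      obtain ⟨IH1, IH2⟩ := ih rest (by simp at hl ⊢; omega) hrest
      rcases hc : chains rest with _ | ⟨C, L⟩ <;> simp only [chains, hc]
      · rw [hc] at IH1
        simp at IH1
        constructor
        · simp [pairAvgs, IH1]
        · intro C hC
          simp at hC
          subst hC
          refine ⟨CS.pair a b hba, ?_⟩
          intro x hx
          simp at hx
          rcases hx with h | h <;> simp [h, List.headI] <;> omega
      · rw [hc] at IH1
        rw [hc] at IH2
        have hCcs : CS C := (IH2 C (by simp)).1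
        have hCpar : Par C := (IH2 C (by simp)).2
        have hChead : C.headI = rest.headI := chains_head rest C L hc
        obtain ⟨x, y, r, hr⟩ := chains_ne_nil_shape rest C L hc
        have hbx : b ≥ rest.headI := by
          subst hr
          exact (List.isChain_cons_cons.mp (hO.2.1.tail)).1
        by_cases hsplit : C.headI < b
        · rw [if_pos hsplit]
          constructor
          · simp only [List.map_cons, List.sum_cons, pairAvgs, IH1]
            simp [Multiset.cons_add]
          · intro D hD
            simp at hD
            rcases hD with h | h | h
            · subst h
              refine ⟨CS.pair a b hba, ?_⟩
              intro z hz
              simp at hz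
              rcases hz with h | h <;> simp [h, List.headI] <;> omega
            · subst h; exact ⟨hCcs, hCpar⟩
            · exact IH2 _ (by simp [h])
        · rw [if_neg hsplit]
          have hCb : C.headI = b := by omega
          obtain ⟨c0, Ct, hCt⟩ : ∃ c0 Ct, C = c0 :: Ct := by
            rcases C with _ | ⟨c0, Ct⟩
            · exact absurd rfl (cs_ne_nil hCcs)
            · exact ⟨c0, Ct, rfl⟩
          have hc0 : c0 = b := by
            subst hCt; simpa [List.headI] using hCb
          subst hCt
          rw [hc0] at hCcs hCpar IH1 IH2 ⊢
          constructor
          · simp only [List.map_cons, List.sum_cons, pairAvgs, IH1]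
            simp [Multiset.cons_add]
          · intro D hD
            simp at hD
            rcases hD with h | h
            · subst h
              refine ⟨CS.cons a b Ct hba hCcs, ?_⟩
              intro z hz
              have hbpar : b % 2 = a % 2 := hab2.symm
              simp only [List.headI]
              simp at hz
              rcases hz with h | h | h
              · simp [h]
              · omega
              · have := hCpar z (by simp [h])
                simp only [List.headI] at this
                omega
            · exact IH2 _ (by simp [h])

lemma map_sum_le (L : List (List ℕ)) (f g : List ℕ → ℕ)
    (h : ∀ c ∈ L, g c ≤ f c) : (L.map g).sum ≤ (L.map f).sum := by
  induction L with
  | nil => simp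
  | cons a L ih =>
    simp only [List.map_cons, List.sum_cons]
    have h1 := h a (by simp)
    have h2 := ih (fun c hc => h c (by simp [hc]))
    omega

lemma map_sum_eq (L : List (List ℕ)) (f g : List ℕ → ℕ)
    (h : ∀ c ∈ L, g c ≤ f c) (he : (L.map f).sum = (L.map g).sum) :
    ∀ c ∈ L, g c = f c := by
  induction L with
  | nil => simp
  | cons a L ih =>
    simp only [List.map_cons, List.sum_cons] at he
    have h1 := h a (by simp)
    have h2 := map_sum_le L f g (fun c hc => h c (by simp [hc]))
    intro c hc
    simp at hc
    rcases hc with h' | h'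
    · subst h'; omega
    · exact ih (fun c hc => h c (by simp [hc])) (by omega) c h'

/-- for a generic type C column sequence `O`, the multiset of
halved consecutive pair sums equals the multiset of halved interior-pair
sums and end-entry averages (taken chain by chain) if and only if every
chain of `O` has length 2. -/
theorem pairing_multisets_eq_iff (O : List ℕ) (hO : TypeC O) (hg : GenericSeq O) :
    pairAvgs O = ((chains O).map chainM2).sum ↔ ∀ C ∈ chains O, C.length = 2 := by
  obtain ⟨hsum, hprops⟩ := master O.length O le_rfl hO
  constructor
  · intro h
    intro C hC
    have hsq : ((chains O).map (sqs ∘ pairAvgs)).sum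
        = ((chains O).map (sqs ∘ chainM2)).sum := by
      have e1 : sqs (pairAvgs O) = sqs (((chains O).map pairAvgs).sum) := by rw [hsum]
      have e2 : sqs (pairAvgs O) = sqs (((chains O).map chainM2).sum) := by rw [h]
      rw [sqs_listsum, List.map_map] at e1 e2
      omega
    have hle : ∀ c ∈ chains O, (sqs ∘ chainM2) c ≤ (sqs ∘ pairAvgs) c := by
      intro c hc
      exact gap c (hprops c hc).1 (hprops c hc).2
    have heq : (sqs ∘ chainM2) C = (sqs ∘ pairAvgs) C := map_sum_eq (chains O) (sqs ∘ pairAvgs)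
      (sqs ∘ chainM2) hle hsq C hC
    by_contra hne
    rcases hg C hC with ⟨hl2, _⟩ | ⟨_, hstrict⟩
    · exact hne hl2
    · exact absurd heq (Nat.ne_of_lt (gap_strict C (hprops C hC).1 (hprops C hC).2 hne hstrict))
  · intro h
    rw [hsum]
    congr 1
    apply List.map_congr_left
    intro C hC
    obtain ⟨x, y, hxy⟩ := List.length_eq_two.mp (h C hC)
    subst hxy
    exact (chainM2_pair x y).symm
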